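/- For every integer n ≥ 1 and every real x, F_{2n}(x) = x·U_{n-1}(x) + (x²−2x+2)·Σ_{k=1}^{n-1} U_{n-1-k}(x)·F_{2k}(x). -/

import Mathlib

/-- Chebyshev polynomials of the first kind. -/
def T : ℕ → ℝ → ℝ
  | 0, _ => 1
  | 1, x => x
  | (n+2), x => 2*x*T (n+1) x - T n x

/-- Chebyshev polynomials of the second kind. -/
def U : ℕ → ℝ → ℝ
  | 0, _ => 1
  | 1, x => 2*x
  | (n+2), x => 2*x*U (n+1) x - U n x

/-- Fibonacci polynomials. -/
def F : ℕ → ℝ → ℝ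
  | 0, _ => 0
  | 1, _ => 1
  | (n+2), x => x*F (n+1) x + F n x

/-- Balancing polynomials. -/
def B : ℕ → ℝ → ℝ
  | 0, _ => 0
  | 1, _ => 1
  | (n+2), x => 6*x*B (n+1) x - B n x

/-- Lucas-balancing polynomials. -/
def C : ℕ → ℝ → ℝ
  | 0, _ => 1
  | 1, x => 3*x
  | (n+2), x => 6*x*C (n+1) x - C n x

/-- Lucas numbers. -/
def lucas : ℕ → ℤ
  | 0 => 2
  | 1 => 1
  | (n+2) => lucas (n+1) + lucas n

lemma F_rec (n : ℕ) (x : ℝ) : F (n+2) x = x * F (n+1) x + F n x := rfl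
lemma U_rec (n : ℕ) (x : ℝ) : U (n+2) x = 2*x*U (n+1) x - U n x := rfl

lemma Feven (m : ℕ) (x : ℝ) :
    F (2*m+4) x = (x^2+2) * F (2*m+2) x - F (2*m) x := by
  have h1 : F (2*m+4) x = x * F (2*m+3) x + F (2*m+2) x := F_rec (2*m+2) x
  have h2 : F (2*m+3) x = x * F (2*m+2) x + F (2*m+1) x := F_rec (2*m+1) x
  have h3 : F (2*m+2) x = x * F (2*m+1) x + F (2*m) x := F_rec (2*m) x
  linear_combination h1 + x*h2 - h3

lemma key (x : ℝ) (m : ℕ) :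
    F (2*(m+1)) x = x * U m x + (x^2-2*x+2) * ∑ k ∈ Finset.Icc 1 m, U (m-k) x * F (2*k) x := by
  induction m using Nat.twoStepInduction with
  | zero => simp [F, U]
  | one =>
      have : Finset.Icc 1 1 = {1} := rfl
      simp [this, F, U]; ring
  | more m ih0 ih1 =>
      have hsplit2 : ∑ k ∈ Finset.Icc 1 (m+2), U (m+2-k) x * F (2*k) x
          = (∑ k ∈ Finset.Icc 1 m, U (m+2-k) x * F (2*k) x)
            + U 1 x * F (2*(m+1)) x + U 0 x * F (2*(m+2)) x := by
        rw [Finset.sum_Icc_succ_top (by omega), Finset.sum_Icc_succ_top (by omega),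
          show m+2-(m+1)=1 from by omega, show m+2-(m+2)=0 from by omega]
      have hsplit1 : ∑ k ∈ Finset.Icc 1 (m+1), U (m+1-k) x * F (2*k) x
          = (∑ k ∈ Finset.Icc 1 m, U (m+1-k) x * F (2*k) x)
            + U 0 x * F (2*(m+1)) x := by
        rw [Finset.sum_Icc_succ_top (by omega), show m+1-(m+1)=0 from by omega]
      have hrec : ∑ k ∈ Finset.Icc 1 m, U (m+2-k) x * F (2*k) x
          = 2*x * (∑ k ∈ Finset.Icc 1 m, U (m+1-k) x * F (2*k) x)
            - ∑ k ∈ Finset.Icc 1 m, U (m-k) x * F (2*k) x := by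
        rw [Finset.mul_sum, ← Finset.sum_sub_distrib]
        refine Finset.sum_congr rfl ?_
        intro k hk
        rw [Finset.mem_Icc] at hk
        have e2 : m+2-k = (m-k)+2 := by omega
        have e1 : m+1-k = (m-k)+1 := by omega
        rw [e2, e1, U_rec]
        ring
      have hF : F (2*(m+2)+2) x = (x^2+2) * F (2*(m+1)+2) x - F (2*(m+1)) x := by
        have := Feven (m+1) x
        have e : 2*(m+1)+4 = 2*(m+2)+2 := by ring
        have e2 : 2*(m+1)+2 = 2*(m+2) := by ring
        rw [e, e2] at this
        rw [this]
        have e3 : 2*(m+2) = 2*(m+1)+2 := by ring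
        rw [e3]
      have e4 : 2*(m+2+1) = 2*(m+2)+2 := by ring
      have e5 : 2*(m+1+1) = 2*(m+1)+2 := by ring
      rw [e4, hF]
      rw [e5] at ih1
      have hU : U (m+2) x = 2*x*U (m+1) x - U m x := U_rec m x
      have hU1 : U 1 x = 2*x := rfl
      have hU0 : U 0 x = 1 := rfl
      have e6 : 2*(m+2) = 2*(m+1)+2 := by ring
      rw [hsplit2, hrec, e6, hU, hU1, hU0]
      rw [hsplit1, hU0] at ih1
      linear_combination 2*x*ih1 - ih0

theorem stmt10 (n : ℕ) (hn : 1 ≤ n) (x : ℝ) :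
    F (2*n) x =
      x * U (n-1) x + (x^2 - 2*x + 2) * ∑ k ∈ Finset.Icc 1 (n-1), U (n-1-k) x * F (2*k) x := by
  obtain ⟨m, rfl⟩ : ∃ m, n = m + 1 := ⟨n-1, by omega⟩
  simpa using key x m
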